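/- Let p ≥ 3 and let X₁, …, X_p be rank-one complex matrices of the same size. If Xᵢ + Xⱼ has rank at most one for all i ≠ j, then X₁ + X₂ + ⋯ + X_p has rank at most one. -/

import Mathlib

noncomputable section

open Matrix Module

namespace Stmt6Aux

variable {m n : ℕ}

lemma mulVec_outer (u : Fin m → ℂ) (v w : Fin n → ℂ) :
    (vecMulVec u v) *ᵥ w = (v ⬝ᵥ w) • u := by
  funext i
  simp only [mulVec, vecMulVec_apply, dotProduct, Pi.smul_apply, smul_eq_mul, Finset.sum_mul]
  exact Finset.sum_congr rfl fun j _ => by ring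

lemma rank_outer_le (u : Fin m → ℂ) (v : Fin n → ℂ) : (vecMulVec u v).rank ≤ 1 := by
  rw [Matrix.rank]
  have h : LinearMap.range (vecMulVec u v).mulVecLin ≤ Submodule.span ℂ {u} := by
    rintro x ⟨w, rfl⟩
    rw [mulVecLin_apply, mulVec_outer]
    exact Submodule.smul_mem _ _ (Submodule.mem_span_singleton_self u)
  by_cases hu : u = 0
  · subst hu
    simp only [Submodule.span_zero_singleton] at h
    have : LinearMap.range (vecMulVec (0 : Fin m → ℂ) v).mulVecLin = ⊥ := le_bot_iff.mp h
    rw [this, finrank_bot]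
    norm_num
  · calc finrank ℂ (LinearMap.range (vecMulVec u v).mulVecLin)
        ≤ finrank ℂ (Submodule.span ℂ {u}) := Submodule.finrank_mono h
      _ = 1 := finrank_span_singleton hu

lemma line_of_rank_le_one {A : Matrix (Fin m) (Fin n) ℂ} (h : A.rank ≤ 1) :
    ∃ u : Fin m → ℂ, ∀ w, ∃ c : ℂ, A *ᵥ w = c • u := by
  rw [Matrix.rank] at h
  obtain ⟨u₀, hu₀⟩ := finrank_le_one_iff.mp h
  refine ⟨u₀, fun w => ?_⟩
  obtain ⟨c, hc⟩ := hu₀ ⟨A *ᵥ w, ⟨w, by simp⟩⟩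
  exact ⟨c, by simpa using congrArg Subtype.val hc.symm⟩

lemma exists_outer_of_rank_le_one {A : Matrix (Fin m) (Fin n) ℂ} (h : A.rank ≤ 1) :
    ∃ u v, A = vecMulVec u v := by
  obtain ⟨u, hu⟩ := line_of_rank_le_one h
  choose c hc using fun j => hu (Pi.single j 1)
  refine ⟨u, c, ?_⟩
  ext i j
  have := congrArg (fun f => f i) (hc j)
  simp only [mulVec_single, mul_one, Pi.smul_apply, smul_eq_mul, MulOpposite.op_one, one_smul, col_apply] at this
  rw [vecMulVec_apply, this, mul_comm]

lemma exists_sep {x y : Fin n → ℂ} (hx : x ≠ 0) (hy : ¬ ∃ c : ℂ, y = c • x) :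
    ∃ w, x ⬝ᵥ w = 0 ∧ y ⬝ᵥ w ≠ 0 := by
  obtain ⟨j, hj⟩ := Function.ne_iff.mp hx
  rw [Pi.zero_apply] at hj
  by_cases hmin : ∀ k, x j * y k = x k * y j
  · exfalso
    refine hy ⟨y j / x j, funext fun k => ?_⟩
    rw [Pi.smul_apply, smul_eq_mul, div_mul_eq_mul_div, eq_div_iff hj]
    linear_combination hmin k
  · push_neg at hmin
    obtain ⟨k, hk⟩ := hmin
    refine ⟨Pi.single k (x j) - Pi.single j (x k), ?_, ?_⟩
    · rw [dotProduct_sub, dotProduct_single, dotProduct_single]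
      ring
    · rw [dotProduct_sub, dotProduct_single, dotProduct_single]
      intro h
      apply hk
      linear_combination h

lemma key {a b : Fin m → ℂ} {x y : Fin n → ℂ} (ha : a ≠ 0) (hb : b ≠ 0)
    (hx : x ≠ 0) (hy : y ≠ 0)
    (h : (vecMulVec a x + vecMulVec b y).rank ≤ 1) :
    (∃ c : ℂ, b = c • a) ∨ (∃ c : ℂ, y = c • x) := by
  by_cases hyx : ∃ c : ℂ, y = c • x
  · exact Or.inr hyx
  left
  have hxy : ¬ ∃ c : ℂ, x = c • y := by
    rintro ⟨d, rfl⟩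
    have hd : d ≠ 0 := by rintro rfl; simp at hx
    exact hyx ⟨d⁻¹, by rw [smul_smul, inv_mul_cancel₀ hd, one_smul]⟩
  obtain ⟨w₁, hw₁x, hw₁y⟩ := exists_sep hx hyx
  obtain ⟨w₂, hw₂y, hw₂x⟩ := exists_sep hy hxy
  obtain ⟨u₀, hu₀⟩ := line_of_rank_le_one h
  have hS : ∀ w, (vecMulVec a x + vecMulVec b y) *ᵥ w = (x ⬝ᵥ w) • a + (y ⬝ᵥ w) • b := by
    intro w; rw [add_mulVec, mulVec_outer, mulVec_outer]
  obtain ⟨c₁, hc₁⟩ := hu₀ w₁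
  obtain ⟨c₂, hc₂⟩ := hu₀ w₂
  rw [hS, hw₁x, zero_smul, zero_add] at hc₁
  rw [hS, hw₂y, zero_smul, add_zero] at hc₂
  -- b = ((y ⬝ᵥ w₁)⁻¹ * c₁) • u₀, a = ((x ⬝ᵥ w₂)⁻¹ * c₂) • u₀
  have hb' : b = ((y ⬝ᵥ w₁)⁻¹ * c₁) • u₀ := by
    rw [mul_smul, ← hc₁, smul_smul, inv_mul_cancel₀ hw₁y, one_smul]
  have ha' : a = ((x ⬝ᵥ w₂)⁻¹ * c₂) • u₀ := by
    rw [mul_smul, ← hc₂, smul_smul, inv_mul_cancel₀ hw₂x, one_smul]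
  have hs0 : ((x ⬝ᵥ w₂)⁻¹ * c₂) ≠ 0 := fun h => ha (by rw [ha', h, zero_smul])
  refine ⟨(y ⬝ᵥ w₁)⁻¹ * c₁ * ((x ⬝ᵥ w₂)⁻¹ * c₂)⁻¹, ?_⟩
  rw [hb', ha', smul_smul, mul_assoc, inv_mul_cancel₀ hs0, mul_one]

end Stmt6Aux

open Stmt6Aux Matrix in
/-- If `X₁, …, X_p` (`p ≥ 3`) are rank-one matrices such that `Xᵢ + Xⱼ` has rank at
most one for all `i ≠ j`, then `X₁ + ⋯ + X_p` has rank at most one. -/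
theorem stmt6 {m n p : ℕ} (hp : 3 ≤ p) (X : Fin p → Matrix (Fin m) (Fin n) ℂ)
    (hrank : ∀ i, (X i).rank = 1)
    (hpair : ∀ i j, i ≠ j → (X i + X j).rank ≤ 1) :
    (∑ i, X i).rank ≤ 1 := by
  choose u v hX using fun i => exists_outer_of_rank_le_one (le_of_eq (hrank i))
  have h0 : ∀ i, X i ≠ 0 := by
    intro i h
    have := hrank i
    rw [h, Matrix.rank_zero] at this
    exact zero_ne_one this
  have hu0 : ∀ i, u i ≠ 0 := by
    intro i h
    apply h0 i
    rw [hX i]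
    ext a b
    simp [vecMulVec_apply, h]
  have hv0 : ∀ i, v i ≠ 0 := by
    intro i h
    apply h0 i
    rw [hX i]
    ext a b
    simp [vecMulVec_apply, h]
  have key' : ∀ i j, i ≠ j → (∃ c : ℂ, u j = c • u i) ∨ (∃ c : ℂ, v j = c • v i) := by
    intro i j hij
    have h := hpair i j hij
    rw [hX i, hX j] at h
    exact key (hu0 i) (hu0 j) (hv0 i) (hv0 j) h
  by_cases H : ∃ i j, ¬ ∃ c : ℂ, v j = c • v i
  · obtain ⟨i, j, hij⟩ := H
    have hne : i ≠ j := by rintro rfl; exact hij ⟨1, (one_smul _ _).symm⟩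
    have hu : ∀ k, ∃ c : ℂ, u k = c • u i := by
      intro k
      by_cases hki : k = i
      · exact ⟨1, by rw [hki, one_smul]⟩
      by_cases hkj : k = j
      · subst hkj
        rcases key' i k hne with hc | hc
        · exact hc
        · exact absurd hc hij
      rcases key' i k (fun h => hki h.symm) with ⟨c, hc⟩ | ⟨c₁, hc₁⟩
      · exact ⟨c, hc⟩
      rcases key' j k (fun h => hkj h.symm) with ⟨c₂, hc₂⟩ | ⟨c₂, hc₂⟩
      · obtain ⟨d, hd⟩ := (key' i j hne).resolve_right (fun h => hij h)
        exact ⟨c₂ * d, by rw [hc₂, hd, smul_smul]⟩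
      · exfalso
        have hc₂0 : c₂ ≠ 0 := by
          rintro rfl
          rw [zero_smul] at hc₂
          exact hv0 k hc₂
        exact hij ⟨c₂⁻¹ * c₁, by rw [mul_smul, ← hc₁, hc₂, smul_smul,
          inv_mul_cancel₀ hc₂0, one_smul]⟩
    choose c hc using hu
    have hsum : ∑ k, X k = vecMulVec (u i) (∑ k, c k • v k) := by
      ext a b
      rw [Matrix.sum_apply, vecMulVec_apply, Finset.sum_apply, Finset.mul_sum]
      refine Finset.sum_congr rfl fun k _ => ?_
      rw [hX k, vecMulVec_apply, hc k]
      simp only [Pi.smul_apply, smul_eq_mul]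
      ring
    rw [hsum]
    exact rank_outer_le _ _
  · push_neg at H
    have i0 : Fin p := ⟨0, by omega⟩
    choose c hc using fun j => H i0 j
    have hsum : ∑ k, X k = vecMulVec (∑ k, c k • u k) (v i0) := by
      ext a b
      rw [Matrix.sum_apply, vecMulVec_apply, Finset.sum_apply, Finset.sum_mul]
      refine Finset.sum_congr rfl fun k _ => ?_
      rw [hX k, vecMulVec_apply, hc k]
      simp only [Pi.smul_apply, smul_eq_mul]
      ring
    rw [hsum]
    exact rank_outer_le _ _
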